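/- Let L be a finite-dimensional nilpotent non-abelian Lie algebra of nilpotency class c. Then dim(L ∧ L) + dim Im γ'₂ ≤ dim(L/L² ∧ L/L²) + Σ_{i=2}^{c} dim(γ_i(L)/γ_{i+1}(L) ⊗ (L/Z(L))^{ab}), where γ'₂ : ((L/Z(L))^{ab})^{⊗3} → (L²/L³) ⊗ (L/Z(L))^{ab} sends x̄ ⊗ ȳ ⊗ z̄ to ([x,y]+L³) ⊗ z̄ + ([z,x]+L³) ⊗ ȳ + ([y,z]+L³) ⊗ x̄. -/

import Mathlib

open Module TensorProduct

set_option maxHeartbeats 1000000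
set_option synthInstance.maxHeartbeats 400000


/-- The dimension of the nonabelian exterior square `L ∧ L ≅ F²/[R,F]` of a Lie
algebra, computed from a free presentation `π : FreeLieAlgebra K X → L`. -/
noncomputable def lieExteriorSquareDim (K : Type) [Field K] (X : Type) {L : Type}
    [LieRing L] [LieAlgebra K L] (π : FreeLieAlgebra K X →ₗ⁅K⁆ L) : ℕ :=
  let F := FreeLieAlgebra K X
  let R : LieIdeal K F := π.ker
  let F2 : LieIdeal K F := LieModule.lowerCentralSeries K F F 1
  Module.finrank K
    (↥(F2 : Submodule K F) ⧸
      (Submodule.comap (F2 : Submodule K F).subtype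
        ((⁅R, (⊤ : LieIdeal K F)⁆ : LieIdeal K F) : Submodule K F)))

/-- `L` is nilpotent of nilpotency class exactly `c`: in the paper's notation
`γ_{c+1}(L) = 0` and `γ_k(L) ≠ 0` for `k ≤ c` (Mathlib's `lowerCentralSeries` is indexed
so that `γ_{k+1}(L) = lowerCentralSeries K L L k`). -/
def lieNilpotencyClass (K : Type) [Field K] (L : Type) [LieRing L] [LieAlgebra K L]
    (c : ℕ) : Prop :=
  LieModule.lowerCentralSeries K L L c = ⊥ ∧
    ∀ k < c, LieModule.lowerCentralSeries K L L k ≠ ⊥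


lemma lie_mem_lowerCentral_one (K : Type) [Field K] {L : Type} [LieRing L]
    [LieAlgebra K L] (x y : L) : ⁅x, y⁆ ∈ LieModule.lowerCentralSeries K L L 1 := by
  rw [show (1 : ℕ) = 0 + 1 from rfl, LieModule.lowerCentralSeries_succ]
  exact LieSubmodule.lie_mem_lie (LieSubmodule.mem_top x) (LieSubmodule.mem_top y)

/-- The term `γ_{j+1}(L)` of the lower central series, as a submodule. -/
noncomputable abbrev lieLcs (K : Type) [Field K] (L : Type) [LieRing L] [LieAlgebra K L]
    (j : ℕ) : Submodule K L :=
  ((LieModule.lowerCentralSeries K L L j : LieSubmodule K L L) : Submodule K L)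

/-- The quotient `L²/L³`. -/
noncomputable abbrev lieQ23 (K : Type) [Field K] (L : Type) [LieRing L] [LieAlgebra K L] :
    Type :=
  ↥(lieLcs K L 1) ⧸ (Submodule.comap (lieLcs K L 1).subtype (lieLcs K L 2))

/-- The class of `⁅x,y⁆ + L³` in `L²/L³`. -/
noncomputable def lieBr23 (K : Type) [Field K] {L : Type} [LieRing L] [LieAlgebra K L]
    (x y : L) : lieQ23 K L :=
  Submodule.Quotient.mk ⟨⁅x, y⁆, lie_mem_lowerCentral_one K x y⟩

/-- The abelianization `(L/Z(L))^{ab} = L/(L² + Z(L))` of `L/Z(L)`. -/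
noncomputable abbrev lieZab (K : Type) [Field K] (L : Type) [LieRing L] [LieAlgebra K L] :
    Type :=
  L ⧸ (lieLcs K L 1 ⊔ ((LieAlgebra.center K L : LieIdeal K L) : Submodule K L))

lemma fd_of_sub_quot {K V : Type} [Field K] [AddCommGroup V] [Module K V]
    (N : Submodule K V) (h1 : FiniteDimensional K ↥N)
    (h2 : FiniteDimensional K (V ⧸ N)) : FiniteDimensional K V :=
  IsNoetherian.iff_fg.mp ((isNoetherian_iff_submodule_quotient N).mpr
    ⟨IsNoetherian.iff_fg.mpr h1, IsNoetherian.iff_fg.mpr h2⟩)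


lemma fd_exterior {K : Type} [Field K] (V : Type) [AddCommGroup V] [Module K V]
    [FiniteDimensional K V] (n : ℕ) : FiniteDimensional K ↥(⋀[K]^n V) := by
  apply (Submodule.fg_iff_finiteDimensional _).mp
  have h1 : (LinearMap.range (ExteriorAlgebra.ι K : V →ₗ[K] ExteriorAlgebra K V)).FG := by
    rw [LinearMap.range_eq_map]
    exact Submodule.FG.map _ Module.Finite.fg_top
  exact h1.pow n

namespace ESB

variable {K : Type} [Field K] {X L : Type} [LieRing L] [LieAlgebra K L]

noncomputable abbrev eF2 (K : Type) [Field K] (X : Type) : Submodule K (FreeLieAlgebra K X) :=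
  lieLcs K (FreeLieAlgebra K X) 1

variable (π : FreeLieAlgebra K X →ₗ⁅K⁆ L)

noncomputable abbrev eNN : Submodule K (FreeLieAlgebra K X) :=
  ((⁅(π.ker : LieIdeal K (FreeLieAlgebra K X)), (⊤ : LieIdeal K (FreeLieAlgebra K X))⁆ :
    LieIdeal K (FreeLieAlgebra K X)) : Submodule K (FreeLieAlgebra K X))

noncomputable abbrev eE : Type :=
  ↥(eF2 K X) ⧸ Submodule.comap (eF2 K X).subtype (eNN π)

noncomputable def mkE : ↥(eF2 K X) →ₗ[K] eE π :=
  (Submodule.comap (eF2 K X).subtype (eNN π)).mkQ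

noncomputable def brkt (f g : FreeLieAlgebra K X) : eE π :=
  mkE π ⟨⁅f, g⁆, lie_mem_lowerCentral_one K f g⟩

lemma brkt_eq_of_eq {f1 g1 f2 g2 : FreeLieAlgebra K X} (h : ⁅f1,g1⁆ = ⁅f2,g2⁆) :
    brkt π f1 g1 = brkt π f2 g2 := by
  unfold brkt; congr 1; exact Subtype.ext h

lemma brkt_add2 {f1 g1 f2 g2 f3 g3 : FreeLieAlgebra K X}
    (h : ⁅f1,g1⁆ = ⁅f2,g2⁆ + ⁅f3,g3⁆) :
    brkt π f1 g1 = brkt π f2 g2 + brkt π f3 g3 := by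
  unfold brkt; rw [← map_add]; congr 1; exact Subtype.ext h

lemma brkt_neg {f1 g1 f2 g2 : FreeLieAlgebra K X} (h : ⁅f1,g1⁆ = -⁅f2,g2⁆) :
    brkt π f1 g1 = - brkt π f2 g2 := by
  unfold brkt; rw [← map_neg]; congr 1; exact Subtype.ext h

lemma brkt_zero_of_mem {f g : FreeLieAlgebra K X} (h : ⁅f,g⁆ ∈ eNN π) :
    brkt π f g = 0 := by
  unfold brkt mkE
  rw [Submodule.mkQ_apply, Submodule.Quotient.mk_eq_zero]
  exact h

lemma brkt_zero3 {f1 g1 f2 g2 f3 g3 : FreeLieAlgebra K X}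
    (h : ⁅f1,g1⁆ + ⁅f2,g2⁆ + ⁅f3,g3⁆ = 0) :
    brkt π f1 g1 + brkt π f2 g2 + brkt π f3 g3 = 0 := by
  unfold brkt
  rw [← map_add, ← map_add, show (⟨⁅f1,g1⁆, lie_mem_lowerCentral_one K f1 g1⟩ +
    ⟨⁅f2,g2⁆, lie_mem_lowerCentral_one K f2 g2⟩ +
    ⟨⁅f3,g3⁆, lie_mem_lowerCentral_one K f3 g3⟩ : ↥(eF2 K X)) = 0 from Subtype.ext h,
    map_zero]

variable (s : L →ₗ[K] FreeLieAlgebra K X)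

noncomputable def lam : L →ₗ[K] L →ₗ[K] eE π :=
  LinearMap.mk₂ K (fun a z => brkt π (s a) (s z))
    (fun a b z => by
      show brkt π (s (a + b)) (s z) = brkt π (s a) (s z) + brkt π (s b) (s z)
      rw [map_add]; exact brkt_add2 π (add_lie _ _ _))
    (fun c a z => by
      show brkt π (s (c • a)) (s z) = c • brkt π (s a) (s z)
      unfold brkt
      rw [← map_smul]
      congr 1
      refine Subtype.ext ?_
      show ⁅s (c • a), s z⁆ = c • ⁅s a, s z⁆
      simp)
    (fun a z w => by
      show brkt π (s a) (s (z + w)) = brkt π (s a) (s z) + brkt π (s a) (s w)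
      rw [map_add]; exact brkt_add2 π (lie_add _ _ _))
    (fun c a z => by
      show brkt π (s a) (s (c • z)) = c • brkt π (s a) (s z)
      unfold brkt
      rw [← map_smul]
      congr 1
      refine Subtype.ext ?_
      show ⁅s a, s (c • z)⁆ = c • ⁅s a, s z⁆
      rw [map_smul]
      exact lie_smul c (s a) (s z))

lemma lam_apply (a z : L) : lam π s a z = brkt π (s a) (s z) := rfl

variable (hs : ∀ a, π (s a) = a)
include hs

lemma brkt_eq (f g : FreeLieAlgebra K X) : brkt π f g = lam π s (π f) (π g) := by
  rw [lam_apply]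
  unfold brkt mkE
  rw [Submodule.mkQ_apply, Submodule.mkQ_apply, Submodule.Quotient.eq]
  have key : ⁅f,g⁆ - ⁅s (π f), s (π g)⁆ =
      ⁅f - s (π f), g⁆ + ⁅s (π f), g - s (π g)⁆ := by
    rw [sub_lie, lie_sub]; abel
  have h1 : f - s (π f) ∈ π.ker := by
    rw [LieHom.mem_ker]
    show π.toLinearMap (f - s (π f)) = 0
    rw [map_sub]
    show π f - π (s (π f)) = 0
    rw [hs]; simp
  have h2 : g - s (π g) ∈ π.ker := by
    rw [LieHom.mem_ker]
    show π.toLinearMap (g - s (π g)) = 0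
    rw [map_sub]
    show π g - π (s (π g)) = 0
    rw [hs]; simp
  have m1 : ⁅f - s (π f), g⁆ ∈ eNN π :=
    (LieSubmodule.mem_toSubmodule _).mpr
      (LieSubmodule.lie_mem_lie h1 (LieSubmodule.mem_top g))
  have m2 : ⁅s (π f), g - s (π g)⁆ ∈ eNN π := by
    rw [← lie_skew]
    exact neg_mem ((LieSubmodule.mem_toSubmodule _).mpr
      (LieSubmodule.lie_mem_lie h2 (LieSubmodule.mem_top _)))
  show ((⟨⁅f,g⁆, _⟩ - ⟨⁅s (π f), s (π g)⁆, _⟩ : ↥(eF2 K X))) ∈ _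
  rw [Submodule.mem_comap]
  show (⁅f,g⁆ - ⁅s (π f), s (π g)⁆ : FreeLieAlgebra K X) ∈ eNN π
  rw [key]; exact add_mem m1 m2

omit hs in
lemma lam_skew (a z : L) : lam π s a z = - lam π s z a := by
  rw [lam_apply, lam_apply]
  exact brkt_neg π (lie_skew _ _).symm

omit hs in
lemma lam_self (a : L) : lam π s a a = 0 := by
  rw [lam_apply]
  exact brkt_zero_of_mem π (by rw [lie_self]; exact zero_mem _)


lemma pi_lie (u v : L) : π ⁅s u, s v⁆ = ⁅u, v⁆ := by
  show π.toLinearMap ⁅s u, s v⁆ = ⁅u, v⁆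
  rw [LieHom.coe_toLinearMap, LieHom.map_lie, hs, hs]

omit hs in
lemma lam_zero_left (z : L) : lam π s 0 z = 0 := by simp

/-- The filtration `M_{i+1}` (paper indexing) of `E = F²/[R,F]`. -/
noncomputable def Mf (i : ℕ) : Submodule K (eE π) :=
  Submodule.span K {e | ∃ a ∈ lieLcs K L i, ∃ z : L, lam π s a z = e}

omit hs in
lemma lam_mem_Mf {i : ℕ} {a : L} (ha : a ∈ lieLcs K L i) (z : L) :
    lam π s a z ∈ Mf π s i :=
  Submodule.subset_span ⟨a, ha, z, rfl⟩

omit hs in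
lemma lieLcs_antitone {i j : ℕ} (h : i ≤ j) : lieLcs K L j ≤ lieLcs K L i := by
  intro a ha
  exact LieModule.antitone_lowerCentralSeries K L L h ha

omit hs in
lemma Mf_antitone {i j : ℕ} (h : i ≤ j) : Mf π s j ≤ Mf π s i := by
  apply Submodule.span_mono
  rintro e ⟨a, ha, z, rfl⟩
  exact ⟨a, lieLcs_antitone h ha, z, rfl⟩

omit hs in
lemma lieLcs_one_span :
    lieLcs K L 1 = Submodule.span K {m : L | ∃ x ∈ (⊤ : LieIdeal K L),
      ∃ n ∈ (⊤ : LieSubmodule K L L), ⁅x, n⁆ = m} := by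
  show ((LieModule.lowerCentralSeries K L L 1 : LieSubmodule K L L) : Submodule K L) = _
  rw [show (1 : ℕ) = 0 + 1 from rfl, LieModule.lowerCentralSeries_succ,
    LieModule.lowerCentralSeries_zero]
  exact LieSubmodule.lieIdeal_oper_eq_linear_span' _ _

lemma lam_lcs_lcs {i : ℕ} {a : L} (ha : a ∈ lieLcs K L i) {z : L}
    (hz : z ∈ lieLcs K L 1) : lam π s a z ∈ Mf π s (i + 1) := by
  rw [lieLcs_one_span] at hz
  induction hz using Submodule.span_induction with
  | mem w hw =>
    obtain ⟨u, -, v, -, rfl⟩ := hw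
    have e1 : lam π s a ⁅u, v⁆ = brkt π (s a) ⁅s u, s v⁆ := by
      rw [brkt_eq π s hs, hs, pi_lie π s hs]
    have e2 : brkt π (s a) ⁅s u, s v⁆ =
        brkt π ⁅s a, s u⁆ (s v) + brkt π (s u) ⁅s a, s v⁆ :=
      brkt_add2 π (leibniz_lie _ _ _)
    have hau : ⁅a, u⁆ ∈ lieLcs K L (i + 1) := by
      have h' : ⁅u, a⁆ ∈ LieModule.lowerCentralSeries K L L (i + 1) := by
        rw [LieModule.lowerCentralSeries_succ]
        exact LieSubmodule.lie_mem_lie (LieSubmodule.mem_top u) ha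
      rw [show ⁅a, u⁆ = -⁅u, a⁆ from by rw [← lie_skew]]
      exact neg_mem h'
    have hav : ⁅a, v⁆ ∈ lieLcs K L (i + 1) := by
      have h' : ⁅v, a⁆ ∈ LieModule.lowerCentralSeries K L L (i + 1) := by
        rw [LieModule.lowerCentralSeries_succ]
        exact LieSubmodule.lie_mem_lie (LieSubmodule.mem_top v) ha
      rw [show ⁅a, v⁆ = -⁅v, a⁆ from by rw [← lie_skew]]
      exact neg_mem h'
    have m1 : brkt π ⁅s a, s u⁆ (s v) ∈ Mf π s (i + 1) := by
      have hπ : π ⁅s a, s u⁆ = ⁅a, u⁆ := pi_lie π s hs a u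
      rw [brkt_eq π s hs, hs, hπ]
      exact lam_mem_Mf π s hau _
    have m2 : brkt π (s u) ⁅s a, s v⁆ ∈ Mf π s (i + 1) := by
      have hπ : π ⁅s a, s v⁆ = ⁅a, v⁆ := pi_lie π s hs a v
      rw [brkt_eq π s hs, hs, hπ, lam_skew]
      exact neg_mem (lam_mem_Mf π s hav _)
    rw [e1, e2]
    exact add_mem m1 m2
  | zero => simp
  | add w1 w2 h1 h2 ih1 ih2 => rw [map_add]; exact add_mem ih1 ih2
  | smul c w h ih => rw [map_smul]; exact Submodule.smul_mem _ c ih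

lemma lam_center {a : L} (ha : a ∈ lieLcs K L 1) {z : L}
    (hz : z ∈ LieAlgebra.center K L) : lam π s a z = 0 := by
  rw [lieLcs_one_span] at ha
  induction ha using Submodule.span_induction with
  | mem w hw =>
    obtain ⟨u, -, v, -, rfl⟩ := hw
    have e1 : lam π s ⁅u, v⁆ z = brkt π ⁅s u, s v⁆ (s z) := by
      rw [brkt_eq π s hs, hs, pi_lie π s hs]
    rw [e1]
    apply brkt_zero_of_mem
    have hvz : ⁅s v, s z⁆ ∈ π.ker := by
      rw [LieHom.mem_ker]
      show π.toLinearMap ⁅s v, s z⁆ = 0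
      rw [LieHom.coe_toLinearMap, LieHom.map_lie, hs, hs]
      exact (LieModule.mem_maxTrivSubmodule K L L z).mp hz v
    have huz : ⁅s u, s z⁆ ∈ π.ker := by
      rw [LieHom.mem_ker]
      show π.toLinearMap ⁅s u, s z⁆ = 0
      rw [LieHom.coe_toLinearMap, LieHom.map_lie, hs, hs]
      exact (LieModule.mem_maxTrivSubmodule K L L z).mp hz u
    rw [lie_lie]
    apply sub_mem
    · rw [← lie_skew]
      exact neg_mem ((LieSubmodule.mem_toSubmodule _).mpr
        (LieSubmodule.lie_mem_lie hvz (LieSubmodule.mem_top _)))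
    · rw [← lie_skew]
      exact neg_mem ((LieSubmodule.mem_toSubmodule _).mpr
        (LieSubmodule.lie_mem_lie huz (LieSubmodule.mem_top _)))
  | zero => simp
  | add w1 w2 h1 h2 ih1 ih2 => rw [map_add, LinearMap.add_apply, ih1, ih2, add_zero]
  | smul c w h ih => rw [map_smul, LinearMap.smul_apply, ih, smul_zero]

omit hs in
lemma eF2_span :
    eF2 K X = Submodule.span K {m : FreeLieAlgebra K X |
      ∃ x ∈ (⊤ : LieIdeal K (FreeLieAlgebra K X)),
      ∃ n ∈ (⊤ : LieSubmodule K (FreeLieAlgebra K X) (FreeLieAlgebra K X)), ⁅x, n⁆ = m} :=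
  lieLcs_one_span

lemma Mf_zero_top (e : eE π) : e ∈ Mf π s 0 := by
  obtain ⟨x, rfl⟩ := Submodule.Quotient.mk_surjective _ e
  suffices h : ∀ xv (_ : xv ∈ Submodule.span K {m : FreeLieAlgebra K X |
      ∃ x ∈ (⊤ : LieIdeal K (FreeLieAlgebra K X)),
      ∃ n ∈ (⊤ : LieSubmodule K (FreeLieAlgebra K X) (FreeLieAlgebra K X)), ⁅x, n⁆ = m})
      (hx : xv ∈ eF2 K X), (Submodule.Quotient.mk ⟨xv, hx⟩ : eE π) ∈ Mf π s 0 by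
    exact h x.1 (by rw [← eF2_span]; exact x.2) x.2
  intro xv hxspan
  induction hxspan using Submodule.span_induction with
  | mem w hw =>
    intro hw'
    obtain ⟨f, -, g, -, rfl⟩ := hw
    have e0 : (Submodule.Quotient.mk ⟨⁅f, g⁆, hw'⟩ : eE π) = brkt π f g := rfl
    rw [e0, brkt_eq π s hs]
    apply lam_mem_Mf
    show π f ∈ (LieModule.lowerCentralSeries K L L 0 : LieSubmodule K L L)
    rw [LieModule.lowerCentralSeries_zero]
    exact LieSubmodule.mem_top (π f)
  | zero =>
    intro h0
    rw [show (⟨0, h0⟩ : ↥(eF2 K X)) = 0 from Subtype.ext rfl,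
      Submodule.Quotient.mk_zero]
    exact zero_mem _
  | add w1 w2 hw1 hw2 ih1 ih2 =>
    intro hx
    have h1 : w1 ∈ eF2 K X := by rw [eF2_span]; exact hw1
    have h2 : w2 ∈ eF2 K X := by rw [eF2_span]; exact hw2
    rw [show (⟨w1 + w2, hx⟩ : ↥(eF2 K X)) = ⟨w1, h1⟩ + ⟨w2, h2⟩ from Subtype.ext rfl,
      Submodule.Quotient.mk_add]
    exact add_mem (ih1 h1) (ih2 h2)
  | smul c w hw ih =>
    intro hx
    have h1 : w ∈ eF2 K X := by rw [eF2_span]; exact hw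
    rw [show (⟨c • w, hx⟩ : ↥(eF2 K X)) = c • ⟨w, h1⟩ from Subtype.ext rfl,
      Submodule.Quotient.mk_smul]
    exact Submodule.smul_mem _ c (ih h1)

omit hs in
lemma Mf_bot (c : ℕ) (hbot : LieModule.lowerCentralSeries K L L c = ⊥)
    {i : ℕ} (hi : c ≤ i) : Mf π s i = ⊥ := by
  rw [eq_bot_iff]
  rw [Mf, Submodule.span_le]
  rintro e ⟨a, ha, z, rfl⟩
  have ha' : a ∈ lieLcs K L c := lieLcs_antitone hi ha
  have : a = 0 := by
    have hm : a ∈ LieModule.lowerCentralSeries K L L c := ha'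
    rw [hbot] at hm
    simpa using hm
  subst this
  simp

noncomputable def psi (i : ℕ) (hi : 1 ≤ i) :
    ((↥(lieLcs K L i) ⧸ Submodule.comap (lieLcs K L i).subtype (lieLcs K L (i+1)))
      ⊗[K] lieZab K L) →ₗ[K] ((eE π) ⧸ Mf π s (i+1)) := by
  refine TensorProduct.lift (Submodule.liftQ _ (LinearMap.flip (Submodule.liftQ _
    ((((lam π s).compr₂ (Mf π s (i+1)).mkQ).comp (lieLcs K L i).subtype).flip) ?_)) ?_)
  · -- second variable kills L² + Z
    intro z hz
    rcases Submodule.mem_sup.mp hz with ⟨z1, hz1, z2, hz2, rfl⟩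
    rw [LinearMap.mem_ker]
    ext a
    simp only [LinearMap.flip_apply, LinearMap.comp_apply, LinearMap.compr₂_apply,
      LinearMap.zero_apply, Submodule.coe_subtype]
    have e1 : lam π s (a : L) (z1 + z2) = lam π s (a : L) z1 + lam π s (a : L) z2 :=
      map_add _ _ _
    have h2 : lam π s (a : L) z2 = 0 :=
      lam_center π s hs (lieLcs_antitone hi a.2) hz2
    rw [e1, h2, add_zero, Submodule.mkQ_apply, Submodule.Quotient.mk_eq_zero]
    exact lam_lcs_lcs π s hs a.2 hz1
  · -- first variable kills γ_{i+1}
    intro a ha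
    rw [LinearMap.mem_ker]
    ext zb
    simp only [LinearMap.comp_apply, Submodule.mkQ_apply, LinearMap.flip_apply,
      Submodule.liftQ_apply, LinearMap.compr₂_apply, Submodule.coe_subtype,
      LinearMap.zero_apply]
    rw [Submodule.Quotient.mk_eq_zero]
    exact lam_mem_Mf π s ha zb

lemma psi_apply (i : ℕ) (hi : 1 ≤ i) (a : ↥(lieLcs K L i)) (z : L) :
    psi π s hs i hi (Submodule.Quotient.mk a ⊗ₜ[K] Submodule.Quotient.mk z) =
      (Mf π s (i+1)).mkQ (lam π s (a : L) z) := by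
  unfold psi
  simp only [TensorProduct.lift.tmul, Submodule.liftQ_apply, LinearMap.flip_apply,
    LinearMap.comp_apply, LinearMap.compr₂_apply, Submodule.coe_subtype]

lemma lam_jacobi (x y z : L) :
    lam π s ⁅x, y⁆ z + lam π s ⁅z, x⁆ y + lam π s ⁅y, z⁆ x = 0 := by
  rw [show lam π s ⁅x, y⁆ z = brkt π ⁅s x, s y⁆ (s z) from by
      rw [brkt_eq π s hs, hs, pi_lie π s hs],
    show lam π s ⁅z, x⁆ y = brkt π ⁅s z, s x⁆ (s y) from by
      rw [brkt_eq π s hs, hs, pi_lie π s hs],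
    show lam π s ⁅y, z⁆ x = brkt π ⁅s y, s z⁆ (s x) from by
      rw [brkt_eq π s hs, hs, pi_lie π s hs]]
  apply brkt_zero3
  have h := lie_jacobi (s x) (s y) (s z)
  rw [show (⁅⁅s x, s y⁆, s z⁆ : FreeLieAlgebra K X) = -⁅s z, ⁅s x, s y⁆⁆ from by
      rw [← lie_skew],
    show (⁅⁅s z, s x⁆, s y⁆ : FreeLieAlgebra K X) = -⁅s y, ⁅s z, s x⁆⁆ from by
      rw [← lie_skew],
    show (⁅⁅s y, s z⁆, s x⁆ : FreeLieAlgebra K X) = -⁅s x, ⁅s y, s z⁆⁆ from by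
      rw [← lie_skew]]
  rw [show -⁅s z, ⁅s x, s y⁆⁆ + -⁅s y, ⁅s z, s x⁆⁆ + -⁅s x, ⁅s y, s z⁆⁆ =
    -(⁅s x, ⁅s y, s z⁆⁆ + ⁅s y, ⁅s z, s x⁆⁆ + ⁅s z, ⁅s x, s y⁆⁆) from by abel, h, neg_zero]

omit hs in
/-- The bilinear map `L/L² × L/L² → E/M₂` induced by `lam`. -/
noncomputable def bV : (L ⧸ lieLcs K L 1) →ₗ[K] (L ⧸ lieLcs K L 1) →ₗ[K]
    ((eE π) ⧸ Mf π s 1) := by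
  refine LinearMap.flip (Submodule.liftQ _ (LinearMap.flip (Submodule.liftQ _
    ((lam π s).compr₂ (Mf π s 1).mkQ) ?_)) ?_)
  · intro x hx
    rw [LinearMap.mem_ker]
    ext z
    simp only [LinearMap.compr₂_apply, LinearMap.zero_apply]
    rw [Submodule.mkQ_apply, Submodule.Quotient.mk_eq_zero]
    exact lam_mem_Mf π s hx z
  · intro z hz
    rw [LinearMap.mem_ker]
    ext x
    simp only [LinearMap.comp_apply, Submodule.mkQ_apply, LinearMap.flip_apply,
      Submodule.liftQ_apply, LinearMap.compr₂_apply, LinearMap.zero_apply]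
    rw [Submodule.Quotient.mk_eq_zero, lam_skew]
    exact neg_mem (lam_mem_Mf π s hz x)

omit hs in
lemma bV_apply (x z : L) :
    bV π s (Submodule.Quotient.mk x) (Submodule.Quotient.mk z) =
      (Mf π s 1).mkQ (lam π s x z) := by
  unfold bV
  simp only [LinearMap.flip_apply, Submodule.liftQ_apply, LinearMap.compr₂_apply]

omit hs in
lemma bV_self (v : L ⧸ lieLcs K L 1) : bV π s v v = 0 := by
  obtain ⟨x, rfl⟩ := Submodule.Quotient.mk_surjective _ v
  rw [bV_apply, lam_self]
  simp

omit hs in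
/-- The induced alternating square map. -/
noncomputable def altV : (L ⧸ lieLcs K L 1) [⋀^Fin 2]→ₗ[K] ((eE π) ⧸ Mf π s 1) where
  toFun v := bV π s (v 0) (v 1)
  map_update_add' m i x y := by
    obtain rfl : ‹DecidableEq (Fin 2)› = instDecidableEqFin 2 := Subsingleton.elim _ _
    fin_cases i
    · exact LinearMap.map_add₂ (bV π s) x y (m 1)
    · exact (bV π s (m 0)).map_add x y
  map_update_smul' m i c x := by
    obtain rfl : ‹DecidableEq (Fin 2)› = instDecidableEqFin 2 := Subsingleton.elim _ _
    fin_cases i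
    · exact LinearMap.map_smul₂ (bV π s) c x (m 1)
    · exact (bV π s (m 0)).map_smul c x
  map_eq_zero_of_eq' v i j hv hij := by
    fin_cases i <;> fin_cases j <;> simp_all
    · exact hv ▸ bV_self π s (v 1)
    · exact hv ▸ bV_self π s (v 0)

omit hs in
noncomputable def famV : ∀ n : ℕ, (L ⧸ lieLcs K L 1) [⋀^Fin n]→ₗ[K] ((eE π) ⧸ Mf π s 1) :=
  fun n => match n with
  | 2 => altV π s
  | 0 => 0
  | 1 => 0
  | (_ + 3) => 0

omit hs in
noncomputable def PhiE : ↥(⋀[K]^2 (L ⧸ lieLcs K L 1)) →ₗ[K] ((eE π) ⧸ Mf π s 1) :=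
  (ExteriorAlgebra.liftAlternating (famV π s)) ∘ₗ (⋀[K]^2 (L ⧸ lieLcs K L 1)).subtype

lemma PhiE_surj : LinearMap.range (PhiE π s) = ⊤ := by
  rw [eq_top_iff]
  rintro q -
  obtain ⟨e, rfl⟩ := Submodule.Quotient.mk_surjective (Mf π s 1) q
  rw [← Submodule.mkQ_apply]
  have he : e ∈ Mf π s 0 := Mf_zero_top π s hs e
  have he' : e ∈ Submodule.span K {e | ∃ a ∈ lieLcs K L 0, ∃ z : L, lam π s a z = e} := he
  clear he
  induction he' using Submodule.span_induction with
  | mem w hw =>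
    obtain ⟨a, ha, z, rfl⟩ := hw
    refine ⟨⟨ExteriorAlgebra.ιMulti K 2
      ![Submodule.Quotient.mk a, Submodule.Quotient.mk z],
      ExteriorAlgebra.ιMulti_range K 2 (Set.mem_range_self _)⟩, ?_⟩
    show (ExteriorAlgebra.liftAlternating (famV π s)) (ExteriorAlgebra.ιMulti K 2 _) = _
    rw [ExteriorAlgebra.liftAlternating_apply_ιMulti]
    show bV π s (![Submodule.Quotient.mk a, Submodule.Quotient.mk z] 0)
      (![Submodule.Quotient.mk a, Submodule.Quotient.mk z] 1) = _
    rw [show (![Submodule.Quotient.mk a, Submodule.Quotient.mk z] 0 :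
        L ⧸ lieLcs K L 1) = Submodule.Quotient.mk a from rfl,
      show (![Submodule.Quotient.mk a, Submodule.Quotient.mk z] 1 :
        L ⧸ lieLcs K L 1) = Submodule.Quotient.mk z from rfl,
      bV_apply]
  | zero => rw [map_zero]; exact zero_mem _
  | add w1 w2 hw1 hw2 ih1 ih2 => rw [map_add]; exact add_mem ih1 ih2
  | smul c w hw ih => rw [map_smul]; exact Submodule.smul_mem _ c ih

lemma theta_range_le (i : ℕ) (hi : 1 ≤ i) :
    LinearMap.range ((Mf π s (i+1)).mkQ ∘ₗ (Mf π s i).subtype) ≤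
      LinearMap.range (psi π s hs i hi) := by
  rintro q ⟨⟨e, he⟩, rfl⟩
  show (Mf π s (i+1)).mkQ e ∈ _
  have he' : e ∈ Submodule.span K {e | ∃ a ∈ lieLcs K L i, ∃ z : L, lam π s a z = e} := he
  clear he
  induction he' using Submodule.span_induction with
  | mem w hw =>
    obtain ⟨a, ha, z, rfl⟩ := hw
    exact ⟨Submodule.Quotient.mk ⟨a, ha⟩ ⊗ₜ[K] Submodule.Quotient.mk z,
      psi_apply π s hs i hi ⟨a, ha⟩ z⟩
  | zero => rw [map_zero]; exact zero_mem _
  | add w1 w2 hw1 hw2 ih1 ih2 => rw [map_add]; exact add_mem ih1 ih2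
  | smul c w hw ih => rw [map_smul]; exact Submodule.smul_mem _ c ih

/-- One step of the filtration argument. -/
lemma step [FiniteDimensional K L] (i : ℕ) (hi : 1 ≤ i)
    (fd2 : FiniteDimensional K ↥(Mf π s (i+1))) :
    FiniteDimensional K ↥(Mf π s i) ∧
    Module.finrank K ↥(Mf π s i) =
      Module.finrank K ↥(LinearMap.range ((Mf π s (i+1)).mkQ ∘ₗ (Mf π s i).subtype))
        + Module.finrank K ↥(Mf π s (i+1)) := by
  set θ : ↥(Mf π s i) →ₗ[K] ((eE π) ⧸ Mf π s (i+1)) :=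
    (Mf π s (i+1)).mkQ ∘ₗ (Mf π s i).subtype with hθ
  have hker : LinearMap.ker θ = Submodule.comap (Mf π s i).subtype (Mf π s (i+1)) := by
    rw [hθ, LinearMap.ker_comp, Submodule.ker_mkQ]
  have hle : Mf π s (i+1) ≤ Mf π s i := Mf_antitone π s (by omega)
  have eker := Submodule.comapSubtypeEquivOfLe hle
  haveI fdker : FiniteDimensional K ↥(LinearMap.ker θ) := by
    rw [hker]; exact Module.Finite.equiv eker.symm
  haveI fdpsidom : FiniteDimensional K
      ((↥(lieLcs K L i) ⧸ Submodule.comap (lieLcs K L i).subtype (lieLcs K L (i+1)))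
        ⊗[K] lieZab K L) := inferInstance
  haveI fdpsirange : FiniteDimensional K ↥(LinearMap.range (psi π s hs i hi)) :=
    inferInstance
  haveI fdrange : FiniteDimensional K ↥(LinearMap.range θ) :=
    Submodule.finiteDimensional_of_le (theta_range_le π s hs i hi)
  haveI fdquot : FiniteDimensional K (↥(Mf π s i) ⧸ LinearMap.ker θ) :=
    Module.Finite.equiv (LinearMap.quotKerEquivRange θ).symm
  haveI fdMi : FiniteDimensional K ↥(Mf π s i) :=
    fd_of_sub_quot (LinearMap.ker θ) fdker fdquot
  refine ⟨fdMi, ?_⟩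
  have rn : Module.finrank K ↥(LinearMap.range θ) + Module.finrank K ↥(LinearMap.ker θ) =
      Module.finrank K ↥(Mf π s i) := LinearMap.finrank_range_add_finrank_ker θ
  have hkr : Module.finrank K ↥(LinearMap.ker θ) = Module.finrank K ↥(Mf π s (i+1)) := by
    rw [hker]; exact LinearEquiv.finrank_eq eker
  omega

lemma step_rank_le [FiniteDimensional K L] (i : ℕ) (hi : 1 ≤ i) :
    Module.finrank K ↥(LinearMap.range ((Mf π s (i+1)).mkQ ∘ₗ (Mf π s i).subtype)) ≤
      Module.finrank K
        ((↥(lieLcs K L i) ⧸ Submodule.comap (lieLcs K L i).subtype (lieLcs K L (i+1)))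
          ⊗[K] lieZab K L) := by
  haveI : FiniteDimensional K
      ((↥(lieLcs K L i) ⧸ Submodule.comap (lieLcs K L i).subtype (lieLcs K L (i+1)))
        ⊗[K] lieZab K L) := inferInstance
  calc Module.finrank K ↥(LinearMap.range ((Mf π s (i+1)).mkQ ∘ₗ (Mf π s i).subtype))
      ≤ Module.finrank K ↥(LinearMap.range (psi π s hs i hi)) :=
        Submodule.finrank_mono (theta_range_le π s hs i hi)
    _ ≤ _ := LinearMap.finrank_range_le _

/-- The downward induction on the filtration. -/
lemma chain [FiniteDimensional K L] (c : ℕ)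
    (hbot : LieModule.lowerCentralSeries K L L c = ⊥) :
    ∀ n i, 1 ≤ i → c ≤ i + n →
      FiniteDimensional K ↥(Mf π s i) ∧
      Module.finrank K ↥(Mf π s i) ≤ ∑ j ∈ Finset.Icc (i+1) c,
        Module.finrank K
          ((↥(lieLcs K L (j-1)) ⧸
            Submodule.comap (lieLcs K L (j-1)).subtype (lieLcs K L j)) ⊗[K] lieZab K L) := by
  intro n
  induction n with
  | zero =>
    intro i hi hci
    have hMi : Mf π s i = ⊥ := Mf_bot π s c hbot (by omega)
    rw [hMi]
    exact ⟨inferInstance, by rw [finrank_bot]; exact Nat.zero_le _⟩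
  | succ n ih =>
    intro i hi hci
    by_cases hci' : c ≤ i
    · have hMi : Mf π s i = ⊥ := Mf_bot π s c hbot hci'
      rw [hMi]
      exact ⟨inferInstance, by rw [finrank_bot]; exact Nat.zero_le _⟩
    · have hlt : i < c := by omega
      obtain ⟨IHfd, IHle⟩ := ih (i+1) (by omega) (by omega)
      obtain ⟨fdMi, hrank⟩ := step π s hs i hi IHfd
      refine ⟨fdMi, ?_⟩
      have h1 := step_rank_le π s hs i hi
      have hins : Finset.Icc (i+1) c = insert (i+1) (Finset.Icc (i+2) c) := by
        ext m; simp only [Finset.mem_Icc, Finset.mem_insert]; omega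
      have hnotmem : (i+1) ∉ Finset.Icc (i+2) c := by
        simp only [Finset.mem_Icc]; omega
      rw [hins, Finset.sum_insert hnotmem]
      have hfinal : Module.finrank K ↥(Mf π s i) ≤
          Module.finrank K
            ((↥(lieLcs K L i) ⧸
              Submodule.comap (lieLcs K L i).subtype (lieLcs K L (i+1))) ⊗[K] lieZab K L)
            + ∑ j ∈ Finset.Icc (i+1+1) c,
                Module.finrank K
                  ((↥(lieLcs K L (j-1)) ⧸
                    Submodule.comap (lieLcs K L (j-1)).subtype (lieLcs K L j))
                    ⊗[K] lieZab K L) := by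
        omega
      exact hfinal

end ESB

lemma span_triple_top {K : Type} [Field K] {M1 M2 M3 N1 N2 N3 : Type}
    [AddCommGroup M1] [Module K M1] [AddCommGroup M2] [Module K M2]
    [AddCommGroup M3] [Module K M3] [AddCommGroup N1] [Module K N1]
    [AddCommGroup N2] [Module K N2] [AddCommGroup N3] [Module K N3]
    (f1 : M1 →ₗ[K] N1) (f2 : M2 →ₗ[K] N2) (f3 : M3 →ₗ[K] N3)
    (h1 : Function.Surjective f1) (h2 : Function.Surjective f2)
    (h3 : Function.Surjective f3) :
    Submodule.span K {t : N1 ⊗[K] (N2 ⊗[K] N3) |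
      ∃ x y z, f1 x ⊗ₜ[K] (f2 y ⊗ₜ[K] f3 z) = t} = ⊤ := by
  rw [eq_top_iff, ← TensorProduct.span_tmul_eq_top K N1 (N2 ⊗[K] N3), Submodule.span_le]
  rintro t ⟨u, w, rfl⟩
  obtain ⟨x, rfl⟩ := h1 u
  have hw : w ∈ Submodule.span K {t : N2 ⊗[K] N3 | ∃ m n, m ⊗ₜ[K] n = t} := by
    rw [TensorProduct.span_tmul_eq_top]; trivial
  induction hw using Submodule.span_induction with
  | mem w' hw' =>
    obtain ⟨m, n, rfl⟩ := hw'
    obtain ⟨y, rfl⟩ := h2 m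
    obtain ⟨z, rfl⟩ := h3 n
    exact Submodule.subset_span ⟨x, y, z, rfl⟩
  | zero => rw [TensorProduct.tmul_zero]; exact zero_mem _
  | add w1 w2 hw1 hw2 ih1 ih2 =>
    rw [TensorProduct.tmul_add]; exact add_mem ih1 ih2
  | smul c w' hw' ih =>
    rw [TensorProduct.tmul_smul]; exact Submodule.smul_mem _ c ih


/-- for a finite-dimensional non-abelian nilpotent Lie algebra `L` of
class `c`, `dim(L ∧ L) + dim Im γ'₂ ≤ dim(L/L² ∧ L/L²) +
Σ_{i=2}^c dim(γ_i(L)/γ_{i+1}(L) ⊗ (L/Z(L))^{ab})`, where `γ'₂` is the linear map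
`((L/Z(L))^{ab})^{⊗3} → (L²/L³) ⊗ (L/Z(L))^{ab}` with
`x̄ ⊗ ȳ ⊗ z̄ ↦ ([x,y]+L³)⊗z̄ + ([z,x]+L³)⊗ȳ + ([y,z]+L³)⊗x̄`, and `L ∧ L` is the
nonabelian exterior square `F²/[R,F]` computed from any free presentation of `L`. -/
theorem exterior_square_bound (K L : Type) [Field K] [LieRing L] [LieAlgebra K L]
    [FiniteDimensional K L] (c : ℕ) (hna : ¬IsLieAbelian L)
    (hc : lieNilpotencyClass K L c) :
    ∀ g : ((lieZab K L) ⊗[K] ((lieZab K L) ⊗[K] (lieZab K L))) →ₗ[K]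
        ((lieQ23 K L) ⊗[K] (lieZab K L)),
      (∀ x y z : L,
        g ((lieLcs K L 1 ⊔ ((LieAlgebra.center K L : LieIdeal K L) : Submodule K L)).mkQ x
            ⊗ₜ ((lieLcs K L 1 ⊔ ((LieAlgebra.center K L : LieIdeal K L) : Submodule K L)).mkQ y
              ⊗ₜ (lieLcs K L 1 ⊔ ((LieAlgebra.center K L : LieIdeal K L) : Submodule K L)).mkQ z)) =
          lieBr23 K x y ⊗ₜ (lieLcs K L 1 ⊔ ((LieAlgebra.center K L : LieIdeal K L) : Submodule K L)).mkQ z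
            + lieBr23 K z x ⊗ₜ (lieLcs K L 1 ⊔ ((LieAlgebra.center K L : LieIdeal K L) : Submodule K L)).mkQ y
            + lieBr23 K y z ⊗ₜ (lieLcs K L 1 ⊔ ((LieAlgebra.center K L : LieIdeal K L) : Submodule K L)).mkQ x) →
      ∀ (X : Type) (π : FreeLieAlgebra K X →ₗ⁅K⁆ L), Function.Surjective π →
        lieExteriorSquareDim K X π + Module.finrank K ↥(LinearMap.range g) ≤
          Module.finrank K ↥(⋀[K]^2 (L ⧸ lieLcs K L 1))
            + ∑ i ∈ Finset.Icc 2 c,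
                Module.finrank K
                  ((↥(lieLcs K L (i - 1)) ⧸
                      Submodule.comap (lieLcs K L (i - 1)).subtype (lieLcs K L i))
                    ⊗[K] (lieZab K L)) := by
  intro g hg X π hπ
  obtain ⟨s, hs0⟩ := LinearMap.exists_rightInverse_of_surjective
    (f := π.toLinearMap) (LinearMap.range_eq_top.mpr hπ)
  have hs : ∀ a, π (s a) = a := by
    intro a
    have h := DFunLike.congr_fun hs0 a
    simpa using h
  have hc2 : 2 ≤ c := by
    by_contra hlt
    push_neg at hlt
    have hab : IsLieAbelian L := by
      constructor
      intro x y
      have h1 : ⁅x, y⁆ ∈ LieModule.lowerCentralSeries K L L 1 :=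
        lie_mem_lowerCentral_one K x y
      have h2 : LieModule.lowerCentralSeries K L L 1 ≤
          LieModule.lowerCentralSeries K L L c :=
        LieModule.antitone_lowerCentralSeries K L L (by omega)
      have h3 := h2 h1
      rw [hc.1] at h3
      simpa using h3
    exact hna hab
  classical
  obtain ⟨fdM2, hM2⟩ := ESB.chain π s hs c hc.1 c 2 (by omega) (by omega)
  have hM2' : Module.finrank K ↥(ESB.Mf π s (1+1)) ≤
      ∑ j ∈ Finset.Icc 3 c, Module.finrank K
        ((↥(lieLcs K L (j-1)) ⧸
          Submodule.comap (lieLcs K L (j-1)).subtype (lieLcs K L j)) ⊗[K] lieZab K L) := hM2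
  have fdM2' : FiniteDimensional K ↥(ESB.Mf π s (1+1)) := fdM2
  obtain ⟨fdM1, hrank1⟩ := ESB.step π s hs 1 (le_refl 1) fdM2'
  set ψ1 := ESB.psi π s hs 1 (le_refl 1) with hψ1
  have hθle : LinearMap.range ((ESB.Mf π s (1+1)).mkQ ∘ₗ (ESB.Mf π s 1).subtype) ≤
      LinearMap.range ψ1 := ESB.theta_range_le π s hs 1 (le_refl 1)
  haveI fdDom : FiniteDimensional K
      ((↥(lieLcs K L 1) ⧸
        Submodule.comap (lieLcs K L 1).subtype (lieLcs K L (1+1))) ⊗[K] lieZab K L) :=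
    inferInstance
  haveI fdRψ : FiniteDimensional K ↥(LinearMap.range ψ1) := inferInstance
  haveI fdKψ : FiniteDimensional K ↥(LinearMap.ker ψ1) := inferInstance
  have h1 : Module.finrank K
      ↥(LinearMap.range ((ESB.Mf π s (1+1)).mkQ ∘ₗ (ESB.Mf π s 1).subtype)) ≤
      Module.finrank K ↥(LinearMap.range ψ1) := Submodule.finrank_mono hθle
  have rn2 : Module.finrank K ↥(LinearMap.range ψ1) +
      Module.finrank K ↥(LinearMap.ker ψ1) =
      Module.finrank K ((↥(lieLcs K L 1) ⧸
        Submodule.comap (lieLcs K L 1).subtype (lieLcs K L (1+1))) ⊗[K] lieZab K L) :=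
    LinearMap.finrank_range_add_finrank_ker ψ1
  -- the image of γ'₂ is killed by ψ1
  have hgker : LinearMap.range g ≤ LinearMap.ker ψ1 := by
    rintro q ⟨t, rfl⟩
    rw [LinearMap.mem_ker]
    have ht : t ∈ Submodule.span K
        {u : (lieZab K L) ⊗[K] ((lieZab K L) ⊗[K] (lieZab K L)) | ∃ x y z : L,
          (lieLcs K L 1 ⊔ ((LieAlgebra.center K L : LieIdeal K L) : Submodule K L)).mkQ x ⊗ₜ[K]
            ((lieLcs K L 1 ⊔ ((LieAlgebra.center K L : LieIdeal K L) : Submodule K L)).mkQ y ⊗ₜ[K]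
              (lieLcs K L 1 ⊔ ((LieAlgebra.center K L : LieIdeal K L) : Submodule K L)).mkQ z) = u} := by
      rw [span_triple_top _ _ _ (Submodule.mkQ_surjective _) (Submodule.mkQ_surjective _)
        (Submodule.mkQ_surjective _)]
      trivial
    induction ht using Submodule.span_induction with
    | mem u hu =>
      obtain ⟨x, y, z, rfl⟩ := hu
      rw [hg x y z, map_add, map_add]
      have e1 : ψ1 (lieBr23 K x y ⊗ₜ[K]
          (lieLcs K L 1 ⊔ ((LieAlgebra.center K L : LieIdeal K L) : Submodule K L)).mkQ z) =
          (ESB.Mf π s (1+1)).mkQ (ESB.lam π s ⁅x, y⁆ z) :=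
        ESB.psi_apply π s hs 1 (le_refl 1) ⟨⁅x, y⁆, lie_mem_lowerCentral_one K x y⟩ z
      have e2 : ψ1 (lieBr23 K z x ⊗ₜ[K]
          (lieLcs K L 1 ⊔ ((LieAlgebra.center K L : LieIdeal K L) : Submodule K L)).mkQ y) =
          (ESB.Mf π s (1+1)).mkQ (ESB.lam π s ⁅z, x⁆ y) :=
        ESB.psi_apply π s hs 1 (le_refl 1) ⟨⁅z, x⁆, lie_mem_lowerCentral_one K z x⟩ y
      have e3 : ψ1 (lieBr23 K y z ⊗ₜ[K]
          (lieLcs K L 1 ⊔ ((LieAlgebra.center K L : LieIdeal K L) : Submodule K L)).mkQ x) =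
          (ESB.Mf π s (1+1)).mkQ (ESB.lam π s ⁅y, z⁆ x) :=
        ESB.psi_apply π s hs 1 (le_refl 1) ⟨⁅y, z⁆, lie_mem_lowerCentral_one K y z⟩ x
      rw [e1, e2, e3, ← map_add, ← map_add, ESB.lam_jacobi π s hs, map_zero]
    | zero => rw [map_zero, map_zero]
    | add t1 t2 ht1 ht2 ih1 ih2 => rw [map_add, map_add, ih1, ih2, add_zero]
    | smul a t' ht' ih => rw [map_smul, map_smul, ih, smul_zero]
  have hgle : Module.finrank K ↥(LinearMap.range g) ≤
      Module.finrank K ↥(LinearMap.ker ψ1) := Submodule.finrank_mono hgker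
  -- exterior square part
  haveI fdExt : FiniteDimensional K ↥(⋀[K]^2 (L ⧸ lieLcs K L 1)) :=
    fd_exterior (L ⧸ lieLcs K L 1) 2
  have hsurj := ESB.PhiE_surj π s hs
  haveI fdQ1 : FiniteDimensional K ((ESB.eE π) ⧸ ESB.Mf π s 1) :=
    Module.Finite.of_surjective (ESB.PhiE π s) (LinearMap.range_eq_top.mp hsurj)
  haveI fdE : FiniteDimensional K (ESB.eE π) := fd_of_sub_quot (ESB.Mf π s 1) fdM1 fdQ1
  have e3' : Module.finrank K ((ESB.eE π) ⧸ ESB.Mf π s 1) +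
      Module.finrank K ↥(ESB.Mf π s 1) = Module.finrank K (ESB.eE π) :=
    Submodule.finrank_quotient_add_finrank _
  have hquotle : Module.finrank K ((ESB.eE π) ⧸ ESB.Mf π s 1) ≤
      Module.finrank K ↥(⋀[K]^2 (L ⧸ lieLcs K L 1)) := by
    have h := LinearMap.finrank_range_le (ESB.PhiE π s)
    rw [hsurj, finrank_top] at h
    exact h
  have hfinal : Module.finrank K (ESB.eE π) + Module.finrank K ↥(LinearMap.range g) ≤
      Module.finrank K ↥(⋀[K]^2 (L ⧸ lieLcs K L 1)) +
        (Module.finrank K ((↥(lieLcs K L 1) ⧸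
            Submodule.comap (lieLcs K L 1).subtype (lieLcs K L (1+1))) ⊗[K] lieZab K L) +
          ∑ j ∈ Finset.Icc 3 c, Module.finrank K
            ((↥(lieLcs K L (j-1)) ⧸
              Submodule.comap (lieLcs K L (j-1)).subtype (lieLcs K L j)) ⊗[K] lieZab K L)) := by
    omega
  have hdim : lieExteriorSquareDim K X π = Module.finrank K (ESB.eE π) := rfl
  have hsplit : Finset.Icc 2 c = insert 2 (Finset.Icc 3 c) := by
    ext m; simp only [Finset.mem_Icc, Finset.mem_insert]; omega
  have hnm : (2 : ℕ) ∉ Finset.Icc 3 c := by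
    simp only [Finset.mem_Icc]; omega
  rw [hdim, hsplit, Finset.sum_insert hnm]
  exact hfinal
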